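/- Let (X, Σ, μ) be a probability space and f : X → X an ergodic measure-preserving map. Let A be a measurable set with μ(A) > 0, let ρ > 0 and 0 < ε < 1. Then there exists N ≥ 1 such that for every n ≥ N, the set A_{ρ,n} := {x ∈ A : there exists an integer R with n ≤ R ≤ (1+ρ)n and f^R(x) ∈ A} satisfies μ(A_{ρ,n}) ≥ (1 − ε)μ(A). -/

import Mathlib

open MeasureTheory

/-- for an ergodic map, most points of a positive-measure set `A`
have a return time to `A` in the window `[n, (1+ρ)n]`, for all large `n`. -/
theorem ergodic_return_time_window
    {X : Type*} [MeasurableSpace X] (μ : Measure X) [IsProbabilityMeasure μ]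
    (f : X → X) (hf : Ergodic f μ)
    (A : Set X) (hA : MeasurableSet A) (hApos : 0 < μ A)
    (ρ ε : ℝ) (hρ : 0 < ρ) (hε : 0 < ε) (hε1 : ε < 1) :
    ∃ N : ℕ, 1 ≤ N ∧ ∀ n : ℕ, N ≤ n →
      ENNReal.ofReal (1 - ε) * μ A ≤
        μ {x | x ∈ A ∧ ∃ R : ℕ, n ≤ R ∧ (R : ℝ) ≤ (1 + ρ) * n ∧ f^[R] x ∈ A} := by
  have hfm : Measurable f := hf.toMeasurePreserving.measurable
  have hAk : ∀ k : ℕ, MeasurableSet (f^[k] ⁻¹' A) := fun k => (hfm.iterate k) hA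
  set U : Set X := ⋃ k : ℕ, f^[k] ⁻¹' A with hU
  have hUm : MeasurableSet U := MeasurableSet.iUnion hAk
  -- f⁻¹' U ⊆ U
  have hpre : f ⁻¹' U ⊆ U := by
    rintro x hx
    simp only [hU, Set.mem_iUnion, Set.mem_preimage] at hx ⊢
    obtain ⟨k, hk⟩ := hx
    exact ⟨k + 1, by rwa [Function.iterate_succ_apply]⟩
  have hUfull : μ U = 1 := by
    rcases hf.ae_empty_or_univ_of_preimage_ae_le' hUm.nullMeasurableSet
        hpre.eventuallyLE (measure_ne_top μ U) with h | h
    · exfalso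
      have : μ A ≤ μ U := measure_mono (by
        intro x hx; exact Set.mem_iUnion.2 ⟨0, hx⟩)
      rw [measure_congr h, measure_empty] at this
      exact hApos.ne' (le_antisymm this bot_le)
    · rw [measure_congr h, measure_univ]
  -- g K = union over k < K
  set g : ℕ → Set X := fun K => ⋃ k ∈ Finset.range K, f^[k] ⁻¹' A with hg
  have hgmono : Monotone g := by
    intro a b hab
    exact Set.biUnion_subset_biUnion_left (Finset.range_subset_range.2 hab)
  have hgU : ⋃ K, g K = U := by
    apply Set.Subset.antisymm
    · exact Set.iUnion_subset fun K =>
        Set.iUnion₂_subset fun k _ => Set.subset_iUnion (fun k => f^[k] ⁻¹' A) k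
    · intro x hx
      obtain ⟨k, hk⟩ := Set.mem_iUnion.1 hx
      exact Set.mem_iUnion.2 ⟨k + 1, Set.mem_biUnion (Finset.mem_range.2 (Nat.lt_succ_self k)) hk⟩
  have htend : Filter.Tendsto (fun K => μ (g K)) Filter.atTop (nhds 1) := by
    have := tendsto_measure_iUnion_atTop (μ := μ) hgmono
    rwa [hgU, hUfull] at this
  set ε' : ENNReal := ENNReal.ofReal ε * μ A with hε'
  have hε'pos : 0 < ε' :=
    ENNReal.mul_pos (by simp [ENNReal.ofReal_pos, hε]) hApos.ne'
  have hε'le1 : ε' ≤ 1 := by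
    have h1 : ENNReal.ofReal ε ≤ 1 := ENNReal.ofReal_le_one.2 hε1.le
    have h2 : μ A ≤ 1 := prob_le_one
    calc ε' ≤ 1 * 1 := mul_le_mul' h1 h2
      _ = 1 := one_mul 1
  -- choose K with μ (g K) ≥ 1 - ε'
  have : ∀ᶠ K in Filter.atTop, 1 - ε' < μ (g K) := by
    exact htend.eventually_const_lt
      (ENNReal.sub_lt_self ENNReal.one_ne_top one_ne_zero hε'pos.ne')
  obtain ⟨K, hK⟩ := this.exists
  have hgKc : μ (g K)ᶜ ≤ ε' := by
    have hm : MeasurableSet (g K) := Finset.measurableSet_biUnion _ fun k _ => hAk k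
    rw [measure_compl hm (measure_ne_top μ _), measure_univ]
    rw [tsub_le_iff_right]
    calc (1 : ENNReal) = ε' + (1 - ε') := (add_tsub_cancel_of_le hε'le1).symm
    _ ≤ ε' + μ (g K) := add_le_add_right hK.le _
  -- choose N
  refine ⟨max 1 ⌈(K : ℝ) / ρ⌉₊, le_max_left _ _, fun n hn => ?_⟩
  have hKn : (K : ℝ) ≤ ρ * n := by
    have h1 : (⌈(K : ℝ) / ρ⌉₊ : ℝ) ≤ n := by
      exact_mod_cast Nat.cast_le.2 (le_trans (le_max_right _ _) hn)
    have h2 : (K : ℝ) / ρ ≤ n := (Nat.le_ceil _).trans h1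
    calc (K : ℝ) = ρ * ((K : ℝ) / ρ) := by field_simp
    _ ≤ ρ * n := by nlinarith
  -- A ∩ f^[n]⁻¹' (g K) ⊆ target
  set S : Set X := {x | x ∈ A ∧ ∃ R : ℕ, n ≤ R ∧ (R : ℝ) ≤ (1 + ρ) * n ∧ f^[R] x ∈ A}
  have hsub : A ∩ f^[n] ⁻¹' (g K) ⊆ S := by
    rintro x ⟨hxA, hx⟩
    simp only [hg, Set.mem_preimage, Set.mem_iUnion, Finset.mem_range] at hx
    obtain ⟨k, hkK, hk⟩ := hx
    refine ⟨hxA, n + k, Nat.le_add_right _ _, ?_, ?_⟩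
    · push_cast
      have : (k : ℝ) ≤ ρ * n := le_trans (by exact_mod_cast hkK.le) hKn
      nlinarith
    · rw [Nat.add_comm, Function.iterate_add_apply]; exact hk
  -- measure estimate
  have hDc : μ (f^[n] ⁻¹' (g K))ᶜ ≤ ε' := by
    rw [← Set.preimage_compl, (hf.toMeasurePreserving.iterate n).measure_preimage
      ((Finset.measurableSet_biUnion _ fun k _ => hAk k).compl.nullMeasurableSet)]
    exact hgKc
  have hmain : μ A ≤ μ (A ∩ f^[n] ⁻¹' (g K)) + ε' := by
    calc μ A ≤ μ (A ∩ f^[n] ⁻¹' (g K) ∪ (f^[n] ⁻¹' (g K))ᶜ) := measure_mono (by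
        intro x hx
        by_cases h : x ∈ f^[n] ⁻¹' (g K)
        · exact Or.inl ⟨hx, h⟩
        · exact Or.inr h)
    _ ≤ μ (A ∩ f^[n] ⁻¹' (g K)) + μ (f^[n] ⁻¹' (g K))ᶜ := measure_union_le _ _
    _ ≤ _ := add_le_add_right hDc _
  have : ENNReal.ofReal (1 - ε) * μ A + ε' ≤ μ A := by
    rw [hε', ← add_mul, ← ENNReal.ofReal_add (by linarith) hε.le]
    simp [le_refl]
  calc ENNReal.ofReal (1 - ε) * μ A ≤ μ A - ε' :=
      ENNReal.le_sub_of_add_le_right (by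
        exact ne_top_of_le_ne_top ENNReal.one_ne_top hε'le1) this
  _ ≤ μ (A ∩ f^[n] ⁻¹' (g K)) := tsub_le_iff_right.2 hmain
  _ ≤ μ S := measure_mono hsub
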